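/- A pair (A,B), with A a connection one-form on P and B a section of Ad P, is a critical point of the cone Yang–Mills functional S_cYM — i.e. (d/dt)|_{t=0} S_cYM(A+tη, B+tξ) = 0 for all η ∈ Ω¹(M, Ad P) and ξ ∈ Ω⁰(M, Ad P) — if and only if it satisfies the cone Yang–Mills equations: d_A^*(F_A + ζB) + [B, d_A B] = 0 and ζ^*(F_A + ζB) + d_A^* d_A B = 0. -/

import Mathlib

open scoped RealInnerProductSpace

/-- **critical points of the cone Yang–Mills functional.**

Abstract formulation over a Riemannian manifold `(M^m, g)` with a principal `G`-bundle
`P` and a closed two-form `ζ ∈ Ω²(M)`: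

* `Ω0, Ω1, Ω2` model `Ω⁰(M, Ad P)`, `Ω¹(M, Ad P)`, `Ω²(M, Ad P)` equipped with their
  `L²` inner products (induced by `g` and an `Ad`-invariant inner product on `Ad P`);
* `d0, d1` model the exterior differential (in a fixed trivialisation),
  `w η ξ = η ∧ ξ`, `br η B = [η, B]` and `bk B η = [B, η]` the graded brackets,
  `zw B = ζ B` wedging with `ζ`, and `zs = ζ^* = (-1)^{(m-k)k} * ζ *` its adjoint;
* `F A' = dA' + A' ∧ A'` is the curvature, `dA1 A' η = dη + [A', η]` and
  `dA0 A' B = dB + [A', B]` the covariant derivatives,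
  `dA1s = d_A^*` and `dA0s = d_A^*` the formal adjoints `(-1)^{mk+m+1} * d_A *`
  (characterised here by the adjointness identities);
* `S A' B' = ‖F_{A'} + ζ B'‖² + ‖d_{A'} B'‖²` is the cone Yang–Mills functional.

The pair `(A, B)` is a critical point of `S_cYM`, i.e.
`(d/dt)|_{t=0} S_cYM(A + tη, B + tξ) = 0` for all `η ∈ Ω¹(M, Ad P)` and
`ξ ∈ Ω⁰(M, Ad P)`, if and only if it satisfies the cone Yang–Mills equations
`d_A^*(F_A + ζB) + [B, d_A B] = 0` and `ζ^*(F_A + ζB) + d_A^* d_A B = 0`. -/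
theorem cone_yang_mills_critical_iff_euler_lagrange
    {Ω0 Ω1 Ω2 : Type*}
    [NormedAddCommGroup Ω0] [InnerProductSpace ℝ Ω0]
    [NormedAddCommGroup Ω1] [InnerProductSpace ℝ Ω1]
    [NormedAddCommGroup Ω2] [InnerProductSpace ℝ Ω2]
    -- exterior differential, wedge product and brackets
    (d0 : Ω0 →ₗ[ℝ] Ω1) (d1 : Ω1 →ₗ[ℝ] Ω2)
    (w : Ω1 →ₗ[ℝ] Ω1 →ₗ[ℝ] Ω2)
    (br : Ω1 →ₗ[ℝ] Ω0 →ₗ[ℝ] Ω1) (bk : Ω0 →ₗ[ℝ] Ω1 →ₗ[ℝ] Ω1)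
    (hbk : ∀ (B' : Ω0) (η : Ω1), bk B' η = - br η B')
    -- wedging with the closed two-form ζ and its adjoint ζ^*
    (zw : Ω0 →ₗ[ℝ] Ω2) (zs : Ω2 →ₗ[ℝ] Ω0)
    (hz : ∀ (ξ : Ω0) (x : Ω2), ⟪zw ξ, x⟫ = ⟪ξ, zs x⟫)
    -- curvature F_{A'} = dA' + A' ∧ A' and covariant derivatives
    (F : Ω1 → Ω2) (hF : ∀ A' : Ω1, F A' = d1 A' + w A' A')
    (dA1 : Ω1 → Ω1 →ₗ[ℝ] Ω2)
    (hdA1 : ∀ (A' η : Ω1), dA1 A' η = d1 η + w A' η + w η A')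
    (dA0 : Ω1 → Ω0 →ₗ[ℝ] Ω1)
    (hdA0 : ∀ (A' : Ω1) (ξ : Ω0), dA0 A' ξ = d0 ξ + br A' ξ)
    -- the connection one-form A and the section B
    (A : Ω1) (B : Ω0)
    -- the formal adjoints d_A^* of d_A
    (dA1s : Ω2 →ₗ[ℝ] Ω1)
    (hdA1s : ∀ (η : Ω1) (x : Ω2), ⟪dA1 A η, x⟫ = ⟪η, dA1s x⟫)
    (dA0s : Ω1 →ₗ[ℝ] Ω0)
    (hdA0s : ∀ (ξ : Ω0) (y : Ω1), ⟪dA0 A ξ, y⟫ = ⟪ξ, dA0s y⟫)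
    -- Ad-invariance of the inner product: ⟨[η, B'], y⟩ = ⟨η, [B', y]⟩
    (hbr : ∀ (η : Ω1) (B' : Ω0) (y : Ω1), ⟪br η B', y⟫ = ⟪η, bk B' y⟫)
    -- the cone Yang–Mills functional
    (S : Ω1 → Ω0 → ℝ)
    (hS : ∀ (A' : Ω1) (B' : Ω0), S A' B' = ‖F A' + zw B'‖ ^ 2 + ‖dA0 A' B'‖ ^ 2) :
    (∀ (η : Ω1) (ξ : Ω0), HasDerivAt (fun t : ℝ => S (A + t • η) (B + t • ξ)) 0 0)
      ↔ (dA1s (F A + zw B) + bk B (dA0 A B) = 0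
          ∧ zs (F A + zw B) + dA0s (dA0 A B) = 0) := by
  set X : Ω2 := F A + zw B with hX
  set Y : Ω1 := dA0 A B with hY
  -- the derivative of the functional along the variation (η, ξ)
  have key : ∀ (η : Ω1) (ξ : Ω0),
      HasDerivAt (fun t : ℝ => S (A + t • η) (B + t • ξ))
        (2 * (⟪X, dA1 A η + zw ξ⟫ + ⟪Y, dA0 A ξ + br η B⟫)) 0 := by
    intro η ξ
    set V1 : Ω2 := dA1 A η + zw ξ with hV1
    set V2 : Ω1 := dA0 A ξ + br η B with hV2
    have hfun : (fun t : ℝ => S (A + t • η) (B + t • ξ))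
        = fun t : ℝ =>
          ⟪X + t • V1 + (t * t) • w η η, X + t • V1 + (t * t) • w η η⟫
        + ⟪Y + t • V2 + (t * t) • br η ξ, Y + t • V2 + (t * t) • br η ξ⟫ := by
      funext t
      have e1 : F (A + t • η) + zw (B + t • ξ)
          = X + t • V1 + (t * t) • w η η := by
        rw [hF, hX, hF, hV1, hdA1]
        simp only [map_add, map_smul, LinearMap.add_apply, LinearMap.smul_apply,
          smul_add, smul_smul]
        module
      have e2 : dA0 (A + t • η) (B + t • ξ)
          = Y + t • V2 + (t * t) • br η ξ := by
        rw [hdA0, hY, hdA0, hV2, hdA0]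
        simp only [map_add, map_smul, LinearMap.add_apply, LinearMap.smul_apply,
          smul_add, smul_smul]
        module
      rw [hS, e1, e2, ← real_inner_self_eq_norm_sq, ← real_inner_self_eq_norm_sq]
    rw [hfun]
    have hsq : HasDerivAt (fun t : ℝ => t * t) 0 (0 : ℝ) := by
      exact ((hasDerivAt_id' (0 : ℝ)).mul (hasDerivAt_id' (0 : ℝ))).congr_deriv (by simp)
    have hu : HasDerivAt (fun t : ℝ => X + t • V1 + (t * t) • w η η) V1 0 := by
      have h1 : HasDerivAt (fun t : ℝ => X + t • V1) V1 0 := by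
        simpa using ((hasDerivAt_id (0 : ℝ)).smul_const V1).const_add X
      exact (h1.add (hsq.smul_const (w η η))).congr_deriv (by simp)
    have hv : HasDerivAt (fun t : ℝ => Y + t • V2 + (t * t) • br η ξ) V2 0 := by
      have h1 : HasDerivAt (fun t : ℝ => Y + t • V2) V2 0 := by
        simpa using ((hasDerivAt_id (0 : ℝ)).smul_const V2).const_add Y
      exact (h1.add (hsq.smul_const (br η ξ))).congr_deriv (by simp)
    have hI1 := (hu.inner (𝕜 := ℝ) hu)
    have hI2 := (hv.inner (𝕜 := ℝ) hv)
    have := hI1.add hI2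
    simp only [zero_smul, add_zero, mul_zero, zero_mul] at this
    refine this.congr_deriv ?_
    rw [real_inner_comm X V1, real_inner_comm Y V2]
    ring
  -- rewriting the first variation using the adjoints
  have hexpr : ∀ (η : Ω1) (ξ : Ω0),
      ⟪X, dA1 A η + zw ξ⟫ + ⟪Y, dA0 A ξ + br η B⟫
        = ⟪η, dA1s X + bk B Y⟫ + ⟪ξ, zs X + dA0s Y⟫ := by
    intro η ξ
    have t1 : ⟪X, dA1 A η⟫ = ⟪η, dA1s X⟫ := (real_inner_comm _ _).trans (hdA1s η X)
    have t2 : ⟪X, zw ξ⟫ = ⟪ξ, zs X⟫ := (real_inner_comm _ _).trans (hz ξ X)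
    have t3 : ⟪Y, dA0 A ξ⟫ = ⟪ξ, dA0s Y⟫ := (real_inner_comm _ _).trans (hdA0s ξ Y)
    have t4 : ⟪Y, br η B⟫ = ⟪η, bk B Y⟫ := (real_inner_comm _ _).trans (hbr η B Y)
    rw [inner_add_right, inner_add_right, inner_add_right, inner_add_right,
      t1, t2, t3, t4]
    ring
  constructor
  · intro H
    have hEL : ∀ (η : Ω1) (ξ : Ω0),
        ⟪η, dA1s X + bk B Y⟫ + ⟪ξ, zs X + dA0s Y⟫ = 0 := by
      intro η ξ
      have h := (key η ξ).unique (H η ξ)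
      rw [hexpr] at h
      linarith
    constructor
    · have h := hEL (dA1s X + bk B Y) 0
      simp only [inner_zero_left, add_zero] at h
      exact inner_self_eq_zero.mp h
    · have h := hEL 0 (zs X + dA0s Y)
      simp only [inner_zero_left, zero_add] at h
      exact inner_self_eq_zero.mp h
  · rintro ⟨h1, h2⟩ η ξ
    have h := key η ξ
    rwa [hexpr, h1, h2, inner_zero_right, inner_zero_right, add_zero, mul_zero] at h
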